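/- Consider the linear time-varying second-order scalar differential equation ψ'' + a₁(t) ψ' + a₀(t) ψ = 0, where a₀, a₁ : [0,∞) → ℝ are non-negative, continuous and bounded functions of time and a₀ is differentiable. If (i) there exists α₁ > 0 such that |a₀'(t)| + |a₁(t)| ≤ α₁ for all t ≥ 0, and (ii) there exists α₂ > 0 such that 0 < α₂ ≤ a₀'(t) + 2 a₀(t) a₁(t) for all t ≥ 0, then the zero solution of the equation is uniformly asymptotically stable: (a) for every ε > 0 there exists δ > 0 such that for every t₀ ≥ 0 and every twice-differentiable solution ψ with |ψ(t₀)| + |ψ'(t₀)| < δ one has |ψ(t)| + |ψ'(t)| < ε for all t ≥ t₀; and (b) there exists δ₀ > 0 such that for every ε > 0 there exists T > 0 so that every solution with |ψ(t₀)| + |ψ'(t₀)| < δ₀ satisfies |ψ(t)| + |ψ'(t)| < ε for all t ≥ t₀ + T. -/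

import Mathlib

open Set


/-- If `f` is continuous on `[s,t]`, differentiable on `(s,t)` with nonpositive
derivative, then `f t ≤ f s`. -/
lemma ign_aux_antitone {f f' : ℝ → ℝ} {s t : ℝ} (hst : s ≤ t)
    (hc : ContinuousOn f (Set.Icc s t))
    (hd : ∀ x ∈ Set.Ioo s t, HasDerivAt f (f' x) x)
    (hd0 : ∀ x ∈ Set.Ioo s t, f' x ≤ 0) : f t ≤ f s := by
  have h := antitoneOn_of_hasDerivWithinAt_nonpos (convex_Icc s t) hc
    (fun x hx => by
      rw [interior_Icc] at hx ⊢
      exact (hd x hx).hasDerivWithinAt)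
    (fun x hx => by rw [interior_Icc] at hx; exact hd0 x hx)
  exact h (Set.left_mem_Icc.2 hst) (Set.right_mem_Icc.2 hst) hst

/-- slope lower bound -/
lemma ign_aux_slope {f f' : ℝ → ℝ} {K s t : ℝ} (hst : s ≤ t)
    (hc : ContinuousOn f (Set.Icc s t))
    (hd : ∀ x ∈ Set.Ioo s t, HasDerivAt f (f' x) x)
    (hd0 : ∀ x ∈ Set.Ioo s t, K ≤ f' x) : K * (t - s) ≤ f t - f s := by
  have h := ign_aux_antitone (f := fun x => K * x - f x) (f' := fun x => K - f' x) hst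
    (by exact (continuousOn_const.mul (continuousOn_id)).sub hc)
    (fun x hx => by
      simpa using ((hasDerivAt_id x).const_mul K).fun_sub (hd x hx))
    (fun x hx => by linarith [hd0 x hx])
  linarith

/-- exponential decay from differential inequality `f' + μ f ≤ 0`. -/
lemma ign_aux_exp_decay {f f' : ℝ → ℝ} {μ s t : ℝ} (hst : s ≤ t)
    (hc : ContinuousOn f (Set.Icc s t))
    (hd : ∀ x ∈ Set.Ioo s t, HasDerivAt f (f' x) x)
    (hd0 : ∀ x ∈ Set.Ioo s t, f' x + μ * f x ≤ 0) :
    f t ≤ f s * Real.exp (-μ * (t - s)) := by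
  have h := ign_aux_antitone (f := fun x => f x * Real.exp (μ * x))
    (f' := fun x => (f' x + μ * f x) * Real.exp (μ * x)) hst
    (hc.mul (Real.continuous_exp.comp (continuous_const.mul continuous_id)).continuousOn)
    (fun x hx => by
      have he : HasDerivAt (fun y => Real.exp (μ * y)) (Real.exp (μ * x) * μ) x := by
        simpa using ((hasDerivAt_id x).const_mul μ).exp
      have := (hd x hx).fun_mul he
      refine this.congr_deriv ?_
      ring)
    (fun x hx => by
      have h1 := hd0 x hx
      have h2 := Real.exp_pos (μ * x)
      exact mul_nonpos_of_nonpos_of_nonneg h1 h2.le)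
  have hepos := Real.exp_pos (μ * t)
  have key : f t * Real.exp (μ * t) ≤ f s * Real.exp (μ * s) := h
  have : f t ≤ f s * Real.exp (μ * s) * (Real.exp (μ * t))⁻¹ := by
    rw [le_mul_inv_iff₀ hepos]
    exact key
  calc f t ≤ f s * Real.exp (μ * s) * (Real.exp (μ * t))⁻¹ := this
    _ = f s * Real.exp (-μ * (t - s)) := by
        rw [← Real.exp_neg, mul_assoc, ← Real.exp_add]; ring_nf

/-- barrier lemma: once the slope is at least `α₂/2` whenever `a₀ < c`, we get
`c ≤ a₀ t` for all `t ≥ 2c/α₂`. -/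
lemma ign_a0_lower {a₀ : ℝ → ℝ} {c α₂ : ℝ} (hc0 : 0 < c) (hα₂ : 0 < α₂)
    (hcont : ContinuousOn a₀ (Set.Ici (0:ℝ)))
    (hdiff : ∀ t ≥ (0:ℝ), DifferentiableAt ℝ a₀ t)
    (hnn : ∀ t ≥ (0:ℝ), 0 ≤ a₀ t)
    (hlow : ∀ v ≥ (0:ℝ), a₀ v < c → α₂/2 ≤ deriv a₀ v) :
    ∀ t ≥ 2*c/α₂, c ≤ a₀ t := by
  have hpersist : ∀ s ≥ (0:ℝ), ∀ t ≥ s, c ≤ a₀ s → c ≤ a₀ t := by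
    intro s hs t hts hcs
    by_contra hct
    push_neg at hct
    set K : Set ℝ := {v ∈ Icc s t | c ≤ a₀ v} with hK
    have hKsub : K ⊆ Icc s t := fun v hv => hv.1
    have hKclosed : IsClosed K := by
      have : K = Icc s t ∩ a₀ ⁻¹' (Ici c) := by
        ext v; simp [hK, Set.mem_Ici, and_comm]
      rw [this]
      exact (hcont.mono (fun v hv => le_trans hs hv.1)).preimage_isClosed_of_isClosed
        isClosed_Icc isClosed_Ici
    have hKcomp : IsCompact K := isCompact_Icc.of_isClosed_subset hKclosed hKsub
    have hKne : K.Nonempty := ⟨s, ⟨left_mem_Icc.2 hts, hcs⟩⟩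
    obtain ⟨hu1, hu2⟩ := hKcomp.sSup_mem hKne
    set u := sSup K
    have hut : u < t := by
      rcases lt_or_eq_of_le hu1.2 with h | h
      · exact h
      · exact absurd (h ▸ hu2) (not_le.2 hct)
    have hu0 : (0:ℝ) ≤ u := le_trans hs hu1.1
    have hbelow : ∀ v ∈ Ioo u t, a₀ v < c := by
      intro v hv
      by_contra hcv
      push_neg at hcv
      have hvK : v ∈ K := ⟨⟨le_trans hu1.1 hv.1.le, hv.2.le⟩, hcv⟩
      exact absurd (le_csSup hKcomp.bddAbove hvK) (not_le.2 hv.1)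
    have hslope := ign_aux_slope (K := α₂/2) hut.le
      (hcont.mono (fun v hv => le_trans hu0 hv.1))
      (fun v hv => (hdiff v (le_trans hu0 hv.1.le)).hasDerivAt)
      (fun v hv => hlow v (le_trans hu0 hv.1.le) (hbelow v hv))
    nlinarith
  intro t ht
  have hT0 : (0:ℝ) < 2*c/α₂ := by positivity
  have ht0 : (0:ℝ) ≤ t := le_trans hT0.le ht
  by_contra hct
  push_neg at hct
  -- show a₀ stays below c on [0, t]
  have hball : ∀ v ∈ Icc (0:ℝ) t, a₀ v < c := by
    intro v hv
    by_contra hcv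
    push_neg at hcv
    exact absurd (hpersist v hv.1 t hv.2 hcv) (not_le.2 hct)
  have hslope := ign_aux_slope (K := α₂/2) ht0
    (hcont.mono (fun v hv => hv.1))
    (fun v hv => (hdiff v hv.1.le).hasDerivAt)
    (fun v hv => hlow v hv.1.le (hball v ⟨hv.1.le, hv.2.le⟩))
  have h0 : 0 ≤ a₀ 0 := hnn 0 le_rfl
  have : α₂/2 * (2*c/α₂) ≤ α₂/2 * (t - 0) := by
    apply mul_le_mul_of_nonneg_left _ (by positivity)
    linarith
  have heq : α₂/2 * (2*c/α₂) = c := by field_simp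
  nlinarith

lemma ign_growth {a₀ a₁ ψ : ℝ → ℝ} {M₀ t₀ s t : ℝ}
    (hM₀ : ∀ x ≥ (0:ℝ), a₀ x ≤ M₀)
    (hnn0 : ∀ x ≥ (0:ℝ), 0 ≤ a₀ x) (hnn1 : ∀ x ≥ (0:ℝ), 0 ≤ a₁ x)
    (ht₀ : 0 ≤ t₀)
    (hdiff : ∀ x ≥ t₀, DifferentiableAt ℝ ψ x ∧ DifferentiableAt ℝ (deriv ψ) x)
    (hode : ∀ x ≥ t₀, deriv (deriv ψ) x + a₁ x * deriv ψ x + a₀ x * ψ x = 0)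
    (hs : t₀ ≤ s) (hst : s ≤ t) :
    ψ t^2 + (deriv ψ t)^2 ≤ (ψ s^2 + (deriv ψ s)^2) * Real.exp ((M₀+1)*(t-s)) := by
  have key := ign_aux_exp_decay (f := fun x => ψ x^2 + (deriv ψ x)^2)
    (f' := fun x => 2*ψ x*deriv ψ x + 2*deriv ψ x*deriv (deriv ψ) x)
    (μ := -(M₀+1)) hst
    (fun x hx => by
      have h := hdiff x (le_trans hs hx.1)
      exact ((h.1.continuousAt.pow 2).add (h.2.continuousAt.pow 2)).continuousWithinAt)
    (fun x hx => by
      have hx' : t₀ ≤ x := le_trans hs hx.1.le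
      have h := hdiff x hx'
      have hψ := h.1.hasDerivAt
      have hq := h.2.hasDerivAt
      have h1 : HasDerivAt (fun y => ψ y ^ 2) (2 * ψ x * deriv ψ x) x := by
        simpa using hψ.fun_pow 2
      have h2 : HasDerivAt (fun y => (deriv ψ y) ^ 2) (2 * deriv ψ x * deriv (deriv ψ) x) x := by
        simpa using hq.fun_pow 2
      exact h1.add h2)
    (fun x hx => by
      have hx' : t₀ ≤ x := le_trans hs hx.1.le
      have hx0 : (0:ℝ) ≤ x := le_trans ht₀ hx'
      have hode' := hode x hx'
      have hb0 := hnn1 x hx0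
      have ha0 := hnn0 x hx0
      have haM := hM₀ x hx0
      set p := ψ x; set q := deriv ψ x; set w := deriv (deriv ψ) x
      have hw : w = -(a₁ x * q) - a₀ x * p := by linarith
      rw [hw]
      nlinarith [sq_nonneg (p+q), sq_nonneg (p-q), mul_nonneg hb0 (sq_nonneg q),
        mul_nonneg ha0 (sq_nonneg (p+q)), mul_nonneg ha0 (sq_nonneg (p-q)),
        mul_nonneg (sub_nonneg.2 haM) (sq_nonneg p),
        mul_nonneg (sub_nonneg.2 haM) (sq_nonneg q)])
  convert key using 3
  ring

set_option maxHeartbeats 2000000 in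
lemma ign_decay {a₀ a₁ ψ : ℝ → ℝ} {M₀ α₁ α₂ c k γ lam Cu μ C t₀ s t : ℝ}
    (hM1 : 1 ≤ M₀) (hM₀ : ∀ x ≥ (0:ℝ), a₀ x ≤ M₀)
    (hnn0 : ∀ x ≥ (0:ℝ), 0 ≤ a₀ x)
    (hnn1 : ∀ x ≥ (0:ℝ), 0 ≤ a₁ x)
    (hα₁ : ∀ x ≥ (0:ℝ), |deriv a₀ x| + |a₁ x| ≤ α₁)
    (hα₂pos : 0 < α₂) (hα₂ : ∀ x ≥ (0:ℝ), α₂ ≤ deriv a₀ x + 2*a₀ x*a₁ x)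
    (hc0 : 0 < c) (hclow : ∀ x ≥ s, c ≤ a₀ x)
    (ha₀diff : ∀ x ≥ (0:ℝ), DifferentiableAt ℝ a₀ x)
    (hγ0 : 0 < γ) (hγM : γ * (2*M₀) ≤ 1) (hγk : γ*(2*c+α₁^2) ≤ k*c)
    (hlam0 : 0 < lam) (hlam1 : 2*lam ≤ k) (hlam2 : 2*lam ≤ γ*c)
    (hCu : Cu = 2 + 1/c) (hμ0 : 0 < μ) (hμCu : μ * Cu = lam)
    (hkM : k * M₀^2 = α₂) (hC : C = 2*M₀*Cu)
    (hs0 : 0 ≤ s) (hs : t₀ ≤ s) (hst : s ≤ t)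
    (hdiff : ∀ x ≥ t₀, DifferentiableAt ℝ ψ x ∧ DifferentiableAt ℝ (deriv ψ) x)
    (hode : ∀ x ≥ t₀, deriv (deriv ψ) x + a₁ x * deriv ψ x + a₀ x * ψ x = 0) :
    ψ t^2 + (deriv ψ t)^2 ≤ C * ((ψ s^2 + (deriv ψ s)^2) * Real.exp (-μ*(t-s))) := by
  have hM0pos : (0:ℝ) < M₀ := lt_of_lt_of_le one_pos hM1
  have hγ1 : 2*γ ≤ 1 := by nlinarith
  -- basic facts at points x of [s,t]
  have hfacts : ∀ x ∈ Icc s t, (0:ℝ) ≤ x ∧ t₀ ≤ x ∧ c ≤ a₀ x ∧ a₀ x ≤ M₀ ∧ a₀ x ≠ 0 ∧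
      0 ≤ a₁ x ∧ a₁ x ≤ α₁ := by
    intro x hx
    have hx0 : (0:ℝ) ≤ x := le_trans hs0 hx.1
    have hcA : c ≤ a₀ x := hclow x hx.1
    refine ⟨hx0, le_trans hs hx.1, hcA, hM₀ x hx0, by linarith, hnn1 x hx0, ?_⟩
    have := hα₁ x hx0
    have := abs_nonneg (deriv a₀ x)
    have := le_abs_self (a₁ x)
    linarith
  set V : ℝ → ℝ := fun x => ψ x^2 + (deriv ψ x)^2 * (a₀ x)⁻¹ + γ*(ψ x * deriv ψ x) with hV
  -- upper bound V ≤ Cu * E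
  have hVup : ∀ x ∈ Icc s t, V x ≤ Cu * (ψ x^2 + (deriv ψ x)^2) := by
    intro x hx
    obtain ⟨hx0, hxt, hcA, hAM, hAne, hb0, hbα⟩ := hfacts x hx
    have hA0 : 0 < a₀ x := lt_of_lt_of_le hc0 hcA
    have hr_le : (a₀ x)⁻¹ ≤ c⁻¹ := (inv_le_inv₀ hA0 hc0).2 hcA
    have hr0 : 0 < (a₀ x)⁻¹ := inv_pos.2 hA0
    have hcinv : 0 < c⁻¹ := inv_pos.2 hc0
    set p := ψ x; set q := deriv ψ x; set r := (a₀ x)⁻¹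
    have hVx : V x = p^2 + q^2 * r + γ*(p*q) := rfl
    rw [hVx, hCu]
    have h1 : q^2 * r ≤ q^2 * c⁻¹ :=
      mul_le_mul_of_nonneg_left hr_le (sq_nonneg q)
    rw [one_div]
    nlinarith [mul_nonneg hγ0.le (sq_nonneg (p-q)), sq_nonneg p, sq_nonneg q,
      mul_nonneg hcinv.le (sq_nonneg p)]
  -- lower bound E ≤ 2 M₀ V
  have hVlow : ∀ x ∈ Icc s t, ψ x^2 + (deriv ψ x)^2 ≤ 2*M₀*(V x) := by
    intro x hx
    obtain ⟨hx0, hxt, hcA, hAM, hAne, hb0, hbα⟩ := hfacts x hx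
    have hA0 : 0 < a₀ x := lt_of_lt_of_le hc0 hcA
    have hrM : M₀⁻¹ ≤ (a₀ x)⁻¹ := (inv_le_inv₀ hM0pos hA0).2 hAM
    have hM₀r : 1 ≤ M₀ * (a₀ x)⁻¹ := by
      calc (1:ℝ) = M₀ * M₀⁻¹ := by field_simp
      _ ≤ M₀ * (a₀ x)⁻¹ := mul_le_mul_of_nonneg_left hrM hM0pos.le
    set p := ψ x; set q := deriv ψ x; set r := (a₀ x)⁻¹
    have hVx : V x = p^2 + q^2 * r + γ*(p*q) := rfl
    rw [hVx]
    nlinarith [mul_nonneg (sub_nonneg.2 hM₀r) (sq_nonneg q),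
      mul_nonneg (sub_nonneg.2 hM1) (sq_nonneg p),
      mul_nonneg (mul_nonneg hM0pos.le hγ0.le) (sq_nonneg (p+q)), sq_nonneg p, sq_nonneg q]
  -- main differential inequality
  set F' : ℝ → ℝ := fun x => 2*ψ x*deriv ψ x
      + (2*deriv ψ x*deriv (deriv ψ) x * (a₀ x)⁻¹ + (deriv ψ x)^2 * (-(deriv a₀ x) / (a₀ x)^2))
      + γ*(deriv ψ x*deriv ψ x + ψ x*deriv (deriv ψ) x) with hF'
  have hcontV : ContinuousOn V (Icc s t) := fun x hx => by
      obtain ⟨hx0, hxt, hcA, hAM, hAne, hb0, hbα⟩ := hfacts x hx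
      have h := hdiff x hxt
      have c1 : ContinuousAt ψ x := h.1.continuousAt
      have c2 : ContinuousAt (deriv ψ) x := h.2.continuousAt
      have c3 : ContinuousAt a₀ x := (ha₀diff x hx0).continuousAt
      exact (((c1.pow 2).add ((c2.pow 2).mul (c3.inv₀ hAne))).add
        (continuousAt_const.mul (c1.mul c2))).continuousWithinAt
  have hderivV : ∀ x ∈ Ioo s t, HasDerivAt V (F' x) x := fun x hx => by
      obtain ⟨hx0, hxt, hcA, hAM, hAne, hb0, hbα⟩ := hfacts x (Ioo_subset_Icc_self hx)
      have h := hdiff x hxt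
      have hψ := h.1.hasDerivAt
      have hq := h.2.hasDerivAt
      have ha := (ha₀diff x hx0).hasDerivAt
      have h1 : HasDerivAt (fun y => ψ y ^ 2) (2 * ψ x * deriv ψ x) x := by
        simpa using hψ.fun_pow 2
      have h2 : HasDerivAt (fun y => (deriv ψ y) ^ 2) (2 * deriv ψ x * deriv (deriv ψ) x) x := by
        simpa using hq.fun_pow 2
      have h3 : HasDerivAt (fun y => (a₀ y)⁻¹) (-(deriv a₀ x) / (a₀ x)^2) x := ha.inv hAne
      have h4 := h2.mul h3
      have h5 := hψ.mul hq
      exact (h1.add h4).add (h5.const_mul γ)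
  have hineqV : ∀ x ∈ Ioo s t, F' x + μ * V x ≤ 0 := fun x hx => by
      obtain ⟨hx0, hxt, hcA, hAM, hAne, hb0, hbα⟩ := hfacts x (Ioo_subset_Icc_self hx)
      have hA0 : 0 < a₀ x := lt_of_lt_of_le hc0 hcA
      have hode' := hode x hxt
      have hda := hα₂ x hx0

      set p := ψ x with hp; set q := deriv ψ x with hqd
      set w := deriv (deriv ψ) x with hwd
      set A := a₀ x with hA; set b := a₁ x with hb; set da := deriv a₀ x with hdad
      have hw : w = -(b*q) - A*p := by linarith
      -- claim 2 : μ * V x ≤ lam * E x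
      have hVx : V x = p^2 + q^2 * A⁻¹ + γ*(p*q) := rfl
      have claim2 : μ * V x ≤ lam * (p^2 + q^2) := by
        have h1 := hVup x (Ioo_subset_Icc_self hx)
        calc μ * V x ≤ μ * (Cu * (p^2 + q^2)) := mul_le_mul_of_nonneg_left h1 hμ0.le
          _ = lam * (p^2 + q^2) := by rw [← hμCu]; ring
      -- claim 1 : derivative expression ≤ -lam * E x
      have claim1 : 2*p*q + (2*q*w * A⁻¹ + q^2 * (-da / A^2)) + γ*(q*q + p*w)
          ≤ -lam * (p^2 + q^2) := by
        have hA0' : (0:ℝ) ≤ A := hA0.le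
        have hb2 : b^2 ≤ α₁^2 := pow_le_pow_left₀ hb0 hbα 2
        have hMA2 : A^2 ≤ M₀^2 := pow_le_pow_left₀ hA0' hAM 2
        have hA2 : (0:ℝ) < A^2 := by positivity
        rw [hw]
        have himp : ∀ X Y : ℝ, (X + Y) * A^2 ≤ 0 → X ≤ -Y := by
          intro X Y hXY
          have h0 : (X + Y) * A^2 ≤ 0 * A^2 := by simpa using hXY
          have := (mul_le_mul_iff_of_pos_right hA2).1 h0
          linarith
        rw [show -lam * (p^2 + q^2) = -(lam*(p^2+q^2)) by ring]
        apply himp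
        have hexp : (2*p*q + (2*q*(-(b*q) - A*p) * A⁻¹ + q^2 * (-da / A^2))
              + γ*(q*q + p*(-(b*q) - A*p)) + lam*(p^2+q^2)) * A^2
            = -(q^2*da) - 2*b*q^2*A
              + A^2*(γ*q^2 - γ*b*p*q - γ*A*p^2 + lam*p^2 + lam*q^2) := by
          field_simp
          ring
        rw [hexp]
        -- positivity certificate
        have hH1 : 0 ≤ γ*A^2*(c*p + b*q)^2 := by positivity
        have hH2 : 0 ≤ c*(da + 2*A*b - α₂)*q^2 :=
          mul_nonneg (mul_nonneg hc0.le (by linarith)) (sq_nonneg q)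
        have hH3 : 0 ≤ (M₀^2 - A^2)*(2*c*γ + 2*c*lam + γ*b^2)*q^2 :=
          mul_nonneg (mul_nonneg (by linarith) (by positivity)) (sq_nonneg q)
        have hH4 : 0 ≤ (k*c - γ*(2*c + α₁^2))*M₀^2*q^2 :=
          mul_nonneg (mul_nonneg (by linarith) (by positivity)) (sq_nonneg q)
        have hH5 : 0 ≤ (k - 2*lam)*c*M₀^2*q^2 :=
          mul_nonneg (mul_nonneg (mul_nonneg (by linarith) hc0.le) (by positivity)) (sq_nonneg q)
        have hH6 : 0 ≤ γ*(α₁^2 - b^2)*M₀^2*q^2 :=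
          mul_nonneg (mul_nonneg (mul_nonneg hγ0.le (by linarith)) (by positivity)) (sq_nonneg q)
        have hH7 : 0 ≤ γ*c*(A - c)*(A*p)^2 :=
          mul_nonneg (mul_nonneg (mul_nonneg hγ0.le hc0.le) (by linarith)) (sq_nonneg (A*p))
        have hH8 : 0 ≤ (γ*c - 2*lam)*c*(A*p)^2 :=
          mul_nonneg (mul_nonneg (by linarith) hc0.le) (sq_nonneg (A*p))
        have hid2 : -(2*c)*(-(q^2*da) - 2*b*q^2*A
              + A^2*(γ*q^2 - γ*b*p*q - γ*A*p^2 + lam*p^2 + lam*q^2))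
            = γ*A^2*(c*p + b*q)^2 + 2*(c*(da + 2*A*b - α₂)*q^2)
              + (M₀^2 - A^2)*(2*c*γ + 2*c*lam + γ*b^2)*q^2
              + (k*c - γ*(2*c + α₁^2))*M₀^2*q^2
              + (k - 2*lam)*c*M₀^2*q^2
              + γ*(α₁^2 - b^2)*M₀^2*q^2
              + 2*(γ*c*(A - c)*(A*p)^2)
              + (γ*c - 2*lam)*c*(A*p)^2 := by
          linear_combination (-(2*c*q^2)) * hkM
        have h0 : 0 ≤ -(2*c)*(-(q^2*da) - 2*b*q^2*A
              + A^2*(γ*q^2 - γ*b*p*q - γ*A*p^2 + lam*p^2 + lam*q^2)) := by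
          rw [hid2]
          linarith only [hH1, hH2, hH3, hH4, hH5, hH6, hH7, hH8]
        by_contra hcon
        push_neg at hcon
        have h2c : (0:ℝ) < 2*c := by linarith
        have hprod := mul_pos h2c hcon
        linarith only [h0, hprod]
      have hgoal : F' x = 2*p*q + (2*q*w * A⁻¹ + q^2 * (-da / A^2)) + γ*(q*q + p*w) := rfl
      rw [hgoal, hVx]
      linarith [claim1, hVx ▸ claim2]
  have key := ign_aux_exp_decay (f := V) (f' := F') (μ := μ) hst hcontV hderivV hineqV
  calc ψ t^2 + (deriv ψ t)^2 ≤ 2*M₀*(V t) := hVlow t (right_mem_Icc.2 hst)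
    _ ≤ 2*M₀*(V s * Real.exp (-μ*(t-s))) := by
        apply mul_le_mul_of_nonneg_left key (by positivity)
    _ ≤ C * ((ψ s^2 + (deriv ψ s)^2) * Real.exp (-μ*(t-s))) := by
        rw [hC]
        have h1 := hVup s (left_mem_Icc.2 hst)
        have h2 := Real.exp_pos (-μ*(t-s))
        nlinarith [mul_le_mul_of_nonneg_right h1 h2.le]


lemma ign_sq1 (x y : ℝ) : x^2 + y^2 ≤ (|x| + |y|)^2 := by
  nlinarith [mul_nonneg (abs_nonneg x) (abs_nonneg y), sq_abs x, sq_abs y]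

lemma ign_sq2 (x y : ℝ) : (|x| + |y|)^2 ≤ 2*(x^2 + y^2) := by
  nlinarith [sq_nonneg (|x| - |y|), sq_abs x, sq_abs y]

lemma ign_lt_of_sq (x ε : ℝ) (hx : 0 ≤ x) (hε : 0 < ε) (h : x^2 < ε^2) : x < ε := by
  by_contra hcon
  push_neg at hcon
  have h7 := mul_le_mul hcon hcon hε.le hx
  nlinarith [h7]

set_option maxHeartbeats 2000000 in
/-- Ignatyev's stability criterion for the linear time-varying second-order
equation `ψ'' + a₁(t) ψ' + a₀(t) ψ = 0`: under conditions (i) and (ii) the zero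
solution is uniformly asymptotically stable (uniform stability together with
uniform attractivity, uniformly in the initial time `t₀`). -/
theorem ignatyev_uniform_asymptotic_stability
    (a₀ a₁ : ℝ → ℝ)
    (ha₀_nonneg : ∀ t ≥ (0 : ℝ), 0 ≤ a₀ t)
    (ha₁_nonneg : ∀ t ≥ (0 : ℝ), 0 ≤ a₁ t)
    (ha₀_cont : ContinuousOn a₀ (Set.Ici (0 : ℝ)))
    (ha₁_cont : ContinuousOn a₁ (Set.Ici (0 : ℝ)))
    (ha₀_bdd : ∃ M : ℝ, ∀ t ≥ (0 : ℝ), |a₀ t| ≤ M)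
    (ha₁_bdd : ∃ M : ℝ, ∀ t ≥ (0 : ℝ), |a₁ t| ≤ M)
    (ha₀_diff : ∀ t ≥ (0 : ℝ), DifferentiableAt ℝ a₀ t)
    (hcond_i : ∃ α₁ > (0 : ℝ), ∀ t ≥ (0 : ℝ), |deriv a₀ t| + |a₁ t| ≤ α₁)
    (hcond_ii : ∃ α₂ > (0 : ℝ), ∀ t ≥ (0 : ℝ),
      α₂ ≤ deriv a₀ t + 2 * a₀ t * a₁ t) :
    -- (a) uniform stability
    (∀ ε > (0 : ℝ), ∃ δ > (0 : ℝ), ∀ t₀ ≥ (0 : ℝ), ∀ ψ : ℝ → ℝ,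
      (∀ t ≥ t₀, DifferentiableAt ℝ ψ t ∧ DifferentiableAt ℝ (deriv ψ) t) →
      (∀ t ≥ t₀, deriv (deriv ψ) t + a₁ t * deriv ψ t + a₀ t * ψ t = 0) →
      |ψ t₀| + |deriv ψ t₀| < δ →
      ∀ t ≥ t₀, |ψ t| + |deriv ψ t| < ε) ∧
    -- (b) uniform attractivity
    (∃ δ₀ > (0 : ℝ), ∀ ε > (0 : ℝ), ∃ T > (0 : ℝ), ∀ t₀ ≥ (0 : ℝ), ∀ ψ : ℝ → ℝ,
      (∀ t ≥ t₀, DifferentiableAt ℝ ψ t ∧ DifferentiableAt ℝ (deriv ψ) t) →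
      (∀ t ≥ t₀, deriv (deriv ψ) t + a₁ t * deriv ψ t + a₀ t * ψ t = 0) →
      |ψ t₀| + |deriv ψ t₀| < δ₀ →
      ∀ t ≥ t₀ + T, |ψ t| + |deriv ψ t| < ε) := by
  classical
  obtain ⟨M', hM'⟩ := ha₀_bdd
  obtain ⟨M₀, hM₀def⟩ : ∃ M₀ : ℝ, M₀ = max M' 1 := ⟨_, rfl⟩
  have hM1 : 1 ≤ M₀ := by rw [hM₀def]; exact le_max_right _ _
  have hM0pos : (0:ℝ) < M₀ := lt_of_lt_of_le one_pos hM1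
  have hM₀ : ∀ x ≥ (0:ℝ), a₀ x ≤ M₀ := fun x hx =>
    le_trans (le_abs_self _) (le_trans (hM' x hx) (hM₀def ▸ le_max_left _ _))
  obtain ⟨α₁, hα₁pos, hα₁⟩ := hcond_i
  obtain ⟨α₂, hα₂pos, hα₂⟩ := hcond_ii
  have ha₁le : ∀ x ≥ (0:ℝ), a₁ x ≤ α₁ := fun x hx => by
    have h := hα₁ x hx
    have := abs_nonneg (deriv a₀ x)
    have := le_abs_self (a₁ x)
    linarith
  obtain ⟨c, hcdef⟩ : ∃ c : ℝ, c = α₂/(4*α₁) := ⟨_, rfl⟩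
  have hc0 : 0 < c := by rw [hcdef]; positivity
  obtain ⟨Tstar, hTdef⟩ : ∃ T : ℝ, T = 2*c/α₂ := ⟨_, rfl⟩
  have hT0 : 0 < Tstar := by rw [hTdef]; positivity
  -- slope bound below level c
  have hlowslope : ∀ v ≥ (0:ℝ), a₀ v < c → α₂/2 ≤ deriv a₀ v := by
    intro v hv hvc
    have h1 := hα₂ v hv
    have hb := ha₁le v hv
    have hb0 := ha₁_nonneg v hv
    have ha0 := ha₀_nonneg v hv
    have hle : 2 * a₀ v * a₁ v ≤ 2 * c * α₁ := by nlinarith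
    have hca : 2*c*α₁ = α₂/2 := by rw [hcdef]; field_simp; ring
    linarith
  have hA : ∀ x ≥ Tstar, c ≤ a₀ x := by
    rw [hTdef]
    exact ign_a0_lower hc0 hα₂pos ha₀_cont ha₀_diff ha₀_nonneg hlowslope
  -- constants
  obtain ⟨k, hkdef⟩ : ∃ k : ℝ, k = α₂/M₀^2 := ⟨_, rfl⟩
  have hk0 : 0 < k := by rw [hkdef]; positivity
  have hkM : k*M₀^2 = α₂ := by rw [hkdef]; field_simp
  obtain ⟨γ, hγdef⟩ : ∃ γ : ℝ, γ = min (1/(2*M₀)) (k*c/(2*c+α₁^2)) := ⟨_, rfl⟩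
  have hγ0 : 0 < γ := by rw [hγdef]; exact lt_min (by positivity) (by positivity)
  have hγM : γ*(2*M₀) ≤ 1 := by
    have h := hγdef ▸ min_le_left (1/(2*M₀)) (k*c/(2*c+α₁^2))
    rw [le_div_iff₀ (by positivity : (0:ℝ) < 2*M₀)] at h
    linarith
  have hγk : γ*(2*c+α₁^2) ≤ k*c := by
    have h := hγdef ▸ min_le_right (1/(2*M₀)) (k*c/(2*c+α₁^2))
    rw [le_div_iff₀ (by positivity : (0:ℝ) < 2*c+α₁^2)] at h
    linarith
  obtain ⟨lam, hlamdef⟩ : ∃ l : ℝ, l = min (k/2) (γ*c/2) := ⟨_, rfl⟩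
  have hlam0 : 0 < lam := by rw [hlamdef]; exact lt_min (by positivity) (by positivity)
  have hlam1 : 2*lam ≤ k := by
    have := hlamdef ▸ min_le_left (k/2) (γ*c/2); linarith
  have hlam2 : 2*lam ≤ γ*c := by
    have := hlamdef ▸ min_le_right (k/2) (γ*c/2); linarith
  obtain ⟨Cu, hCudef⟩ : ∃ u : ℝ, u = 2 + 1/c := ⟨_, rfl⟩
  have hCu0 : 0 < Cu := by rw [hCudef]; positivity
  obtain ⟨μ, hμdef⟩ : ∃ m : ℝ, m = lam/Cu := ⟨_, rfl⟩
  have hμ0 : 0 < μ := by rw [hμdef]; positivity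
  have hμCu : μ*Cu = lam := by rw [hμdef]; field_simp
  obtain ⟨C, hCdef⟩ : ∃ C : ℝ, C = 2*M₀*Cu := ⟨_, rfl⟩
  have hC0 : 0 < C := by rw [hCdef]; positivity
  have hCu2 : 2 ≤ Cu := by
    have h1c : 0 < 1/c := by positivity
    rw [hCudef]; linarith
  have hC1 : 1 ≤ C := by
    rw [hCdef]
    nlinarith [mul_nonneg (by linarith : (0:ℝ) ≤ M₀ - 1) (by linarith : (0:ℝ) ≤ Cu - 2), hM1, hCu2]
  obtain ⟨C', hC'def⟩ : ∃ C' : ℝ, C' = C * Real.exp ((M₀+1)*Tstar) := ⟨_, rfl⟩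
  have hexp1 : 1 ≤ Real.exp ((M₀+1)*Tstar) := Real.one_le_exp (by positivity)
  have hC'1 : 1 ≤ C' := by
    rw [hC'def]
    nlinarith [mul_nonneg (by linarith : (0:ℝ) ≤ C - 1) (by linarith : (0:ℝ) ≤ Real.exp ((M₀+1)*Tstar) - 1), hC1, hexp1]
  have hC'0 : 0 < C' := lt_of_lt_of_le one_pos hC'1
  -- global bound and decay bound, per solution
  have hMain : ∀ t₀ ≥ (0:ℝ), ∀ ψ : ℝ → ℝ,
      (∀ x ≥ t₀, DifferentiableAt ℝ ψ x ∧ DifferentiableAt ℝ (deriv ψ) x) →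
      (∀ x ≥ t₀, deriv (deriv ψ) x + a₁ x * deriv ψ x + a₀ x * ψ x = 0) →
      (∀ t ≥ t₀, ψ t^2 + (deriv ψ t)^2 ≤ C' * (ψ t₀^2 + (deriv ψ t₀)^2)) ∧
      (∀ T, Tstar ≤ T → ∀ t, t₀ + T ≤ t →
        ψ t^2 + (deriv ψ t)^2
          ≤ C' * (ψ t₀^2 + (deriv ψ t₀)^2) * Real.exp (-μ*(T - Tstar))) := by
    intro t₀ ht₀ ψ hdiff hode
    obtain ⟨s, hsdef⟩ : ∃ s : ℝ, s = max t₀ Tstar := ⟨_, rfl⟩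
    have hst₀ : t₀ ≤ s := hsdef ▸ le_max_left _ _
    have hsT : Tstar ≤ s := hsdef ▸ le_max_right _ _
    have hs0 : 0 ≤ s := le_trans hT0.le hsT
    have hsub : s ≤ t₀ + Tstar := by rw [hsdef]; exact max_le (by linarith) (by linarith)
    have hE0 : 0 ≤ ψ t₀^2 + (deriv ψ t₀)^2 := by positivity
    have hclow : ∀ x ≥ s, c ≤ a₀ x := fun x hx => hA x (le_trans hsT hx)
    -- growth up to s
    have hgs : ψ s^2 + (deriv ψ s)^2
        ≤ (ψ t₀^2 + (deriv ψ t₀)^2) * Real.exp ((M₀+1)*Tstar) := by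
      have hg := ign_growth hM₀ ha₀_nonneg ha₁_nonneg ht₀ hdiff hode le_rfl hst₀
      have hmono : Real.exp ((M₀+1)*(s - t₀)) ≤ Real.exp ((M₀+1)*Tstar) :=
        Real.exp_le_exp.2 (mul_le_mul_of_nonneg_left (by linarith) (by linarith))
      exact le_trans hg (mul_le_mul_of_nonneg_left hmono hE0)
    have hEs0 : 0 ≤ ψ s^2 + (deriv ψ s)^2 := by positivity
    constructor
    · intro t ht
      rcases le_total t s with h | h
      · have hg := ign_growth hM₀ ha₀_nonneg ha₁_nonneg ht₀ hdiff hode le_rfl ht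
        have hmono : Real.exp ((M₀+1)*(t - t₀)) ≤ Real.exp ((M₀+1)*Tstar) :=
          Real.exp_le_exp.2 (mul_le_mul_of_nonneg_left (by linarith) (by linarith))
        have hCexp : Real.exp ((M₀+1)*Tstar) ≤ C' := by
          rw [hC'def]
          nth_rewrite 1 [← one_mul (Real.exp ((M₀+1)*Tstar))]
          exact mul_le_mul_of_nonneg_right hC1 (Real.exp_pos _).le
        calc ψ t^2 + (deriv ψ t)^2
            ≤ (ψ t₀^2 + (deriv ψ t₀)^2) * Real.exp ((M₀+1)*(t-t₀)) := hg
          _ ≤ (ψ t₀^2 + (deriv ψ t₀)^2) * Real.exp ((M₀+1)*Tstar) :=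
              mul_le_mul_of_nonneg_left hmono hE0
          _ ≤ (ψ t₀^2 + (deriv ψ t₀)^2) * C' := mul_le_mul_of_nonneg_left hCexp hE0
          _ = C' * (ψ t₀^2 + (deriv ψ t₀)^2) := mul_comm _ _
      · have hd := ign_decay hM1 hM₀ ha₀_nonneg ha₁_nonneg hα₁ hα₂pos hα₂ hc0 hclow
          ha₀_diff hγ0 hγM hγk hlam0 hlam1 hlam2 hCudef hμ0 hμCu hkM hCdef
          hs0 hst₀ h hdiff hode
        have hexple : Real.exp (-μ*(t-s)) ≤ 1 := by
          rw [Real.exp_le_one_iff]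
          have : 0 ≤ μ*(t-s) := mul_nonneg hμ0.le (by linarith)
          linarith
        have h2 : ψ t^2 + (deriv ψ t)^2 ≤ C * (ψ s^2 + (deriv ψ s)^2) := by
          refine le_trans hd (mul_le_mul_of_nonneg_left ?_ hC0.le)
          have h := mul_le_mul_of_nonneg_left hexple hEs0
          simpa using h
        calc ψ t^2 + (deriv ψ t)^2 ≤ C * (ψ s^2 + (deriv ψ s)^2) := h2
          _ ≤ C * ((ψ t₀^2 + (deriv ψ t₀)^2) * Real.exp ((M₀+1)*Tstar)) :=
              mul_le_mul_of_nonneg_left hgs hC0.le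
          _ = C' * (ψ t₀^2 + (deriv ψ t₀)^2) := by rw [hC'def]; ring
    · intro T hTT t ht
      have hstle : s ≤ t := by
        have : t₀ + Tstar ≤ t₀ + T := by linarith
        linarith
      have hd := ign_decay hM1 hM₀ ha₀_nonneg ha₁_nonneg hα₁ hα₂pos hα₂ hc0 hclow
        ha₀_diff hγ0 hγM hγk hlam0 hlam1 hlam2 hCudef hμ0 hμCu hkM hCdef
        hs0 hst₀ hstle hdiff hode
      have hexpmono : Real.exp (-μ*(t-s)) ≤ Real.exp (-μ*(T - Tstar)) := by
        apply Real.exp_le_exp.2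
        have h5 : T - Tstar ≤ t - s := by linarith
        have h6 := mul_le_mul_of_nonneg_left h5 hμ0.le
        linarith
      have h1 : (ψ s^2 + (deriv ψ s)^2) * Real.exp (-μ*(t-s))
          ≤ ((ψ t₀^2 + (deriv ψ t₀)^2) * Real.exp ((M₀+1)*Tstar))
            * Real.exp (-μ*(T-Tstar)) :=
        mul_le_mul hgs hexpmono (Real.exp_pos _).le (by positivity)
      calc ψ t^2 + (deriv ψ t)^2
          ≤ C * ((ψ s^2 + (deriv ψ s)^2) * Real.exp (-μ*(t-s))) := hd
        _ ≤ C * (((ψ t₀^2 + (deriv ψ t₀)^2) * Real.exp ((M₀+1)*Tstar))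
              * Real.exp (-μ*(T-Tstar))) := mul_le_mul_of_nonneg_left h1 hC0.le
        _ = C' * (ψ t₀^2 + (deriv ψ t₀)^2) * Real.exp (-μ*(T-Tstar)) := by
            rw [hC'def]; ring
  constructor
  · -- (a) uniform stability
    intro ε hε
    refine ⟨ε/(2*C'), by positivity, ?_⟩
    intro t₀ ht₀ ψ hdiff hode hinit t ht
    have hglob := (hMain t₀ ht₀ ψ hdiff hode).1 t ht
    have hE0lt : ψ t₀^2 + (deriv ψ t₀)^2 < (ε/(2*C'))^2 := by
      have h1 := ign_sq1 (ψ t₀) (deriv ψ t₀)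
      have h2 : (|ψ t₀| + |deriv ψ t₀|)^2 < (ε/(2*C'))^2 :=
        pow_lt_pow_left₀ hinit (by positivity) (by norm_num)
      linarith
    have hfin : (|ψ t| + |deriv ψ t|)^2 < ε^2 := by
      have h2 := ign_sq2 (ψ t) (deriv ψ t)
      have h3 : C' * (ψ t₀^2 + (deriv ψ t₀)^2) < C' * (ε/(2*C'))^2 :=
        mul_lt_mul_of_pos_left hE0lt hC'0
      have h4 : 2 * (C' * (ε/(2*C'))^2) ≤ ε^2 := by
        have : 2 * (C' * (ε/(2*C'))^2) = ε^2 / (2*C') := by field_simp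
        rw [this]
        apply div_le_self (by positivity)
        linarith
      linarith
    exact ign_lt_of_sq _ _ (by positivity) hε hfin
  · -- (b) uniform attractivity
    refine ⟨1, one_pos, ?_⟩
    intro ε hε
    obtain ⟨X, hXdef⟩ : ∃ X : ℝ, X = max (2*C'/ε^2) 1 := ⟨_, rfl⟩
    have hX1 : 1 ≤ X := hXdef ▸ le_max_right _ _
    have hX0 : 0 < X := lt_of_lt_of_le one_pos hX1
    have hXge : 2*C'/ε^2 ≤ X := hXdef ▸ le_max_left _ _
    have hlogX : 0 ≤ Real.log X := Real.log_nonneg hX1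
    obtain ⟨T, hTdef2⟩ : ∃ T : ℝ, T = Tstar + 1 + (1/μ)*Real.log X := ⟨_, rfl⟩
    have hTpos : 0 < T := by
      rw [hTdef2]
      have : 0 ≤ (1/μ)*Real.log X := by positivity
      linarith
    refine ⟨T, hTpos, ?_⟩
    intro t₀ ht₀ ψ hdiff hode hinit t ht
    have hTT : Tstar ≤ T := by
      rw [hTdef2]
      have : 0 ≤ (1/μ)*Real.log X := by positivity
      linarith
    have hdec := (hMain t₀ ht₀ ψ hdiff hode).2 T hTT t ht
    have hexpval : Real.exp (-μ*(T - Tstar)) = Real.exp (-μ) * X⁻¹ := by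
      have harg : -μ*(T - Tstar) = -μ - Real.log X := by
        rw [hTdef2]; field_simp; ring
      rw [harg, Real.exp_sub, Real.exp_log hX0, div_eq_mul_inv]
    have hE0le : ψ t₀^2 + (deriv ψ t₀)^2 ≤ 1 := by
      have h1 := ign_sq1 (ψ t₀) (deriv ψ t₀)
      have h2 : (|ψ t₀| + |deriv ψ t₀|)^2 < 1^2 :=
        pow_lt_pow_left₀ hinit (by positivity) (by norm_num)
      linarith
    have hexplt : Real.exp (-μ) < 1 := Real.exp_lt_one_iff.2 (by linarith)
    have hXinv : 2*C' * X⁻¹ ≤ ε^2 := by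
      rw [← div_eq_mul_inv, div_le_iff₀ hX0]
      rw [div_le_iff₀ (by positivity : (0:ℝ) < ε^2)] at hXge
      linarith
    have hfin : (|ψ t| + |deriv ψ t|)^2 < ε^2 := by
      have h2 := ign_sq2 (ψ t) (deriv ψ t)
      rw [hexpval] at hdec
      have hXinv0 : 0 < X⁻¹ := by positivity
      have hCX : 0 < C' * X⁻¹ := by positivity
      -- E t ≤ C' * E t₀ * (exp(-μ) * X⁻¹) ≤ C' * exp(-μ) * X⁻¹ < C' * X⁻¹, then *2
      have h3 : C' * (ψ t₀^2 + (deriv ψ t₀)^2) * (Real.exp (-μ) * X⁻¹)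
          ≤ C' * (Real.exp (-μ) * X⁻¹) := by
        have h := mul_le_mul_of_nonneg_right (mul_le_mul_of_nonneg_left hE0le hC'0.le)
          (le_of_lt (mul_pos (Real.exp_pos (-μ)) hXinv0))
        simpa using h
      have h4 : C' * (Real.exp (-μ) * X⁻¹) < C' * X⁻¹ := by
        have h := mul_lt_mul_of_pos_right hexplt hXinv0
        rw [one_mul] at h
        exact mul_lt_mul_of_pos_left h hC'0
      linarith
    exact ign_lt_of_sq _ _ (by positivity) hε hfin
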